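/- A finite nilpotent quandle Q is latin if and only if it is connected and superfaithful. -/

import Mathlib

/-- A left quasigroup: left multiplications are bijective. -/
class LQgrp (Q : Type*) where
  mul : Q → Q → Q
  ld : Q → Q → Q
  ld_mul : ∀ x y, ld x (mul x y) = y
  mul_ld : ∀ x y, mul x (ld x y) = y

namespace LQgrp

variable {Q : Type*} [LQgrp Q]

/-- Left multiplication as a permutation. -/
def LM (a : Q) : Equiv.Perm Q := ⟨mul a, ld a, ld_mul a, mul_ld a⟩

/-- The left multiplication group. -/
def LMlt (Q : Type*) [LQgrp Q] : Subgroup (Equiv.Perm Q) :=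
  Subgroup.closure (Set.range (LM : Q → Equiv.Perm Q))

/-- Subalgebras: subsets closed under both operations. -/
def IsSubalg (S : Set Q) : Prop :=
  (∀ a ∈ S, ∀ b ∈ S, mul a b ∈ S) ∧ (∀ a ∈ S, ∀ b ∈ S, ld a b ∈ S)

/-- The subalgebra generated by a set. -/
def Sg (X : Set Q) : Set Q := ⋂₀ {S | IsSubalg S ∧ X ⊆ S}

/-- A subset is connected if the group generated by its left translations
acts transitively on it. -/
def ConnectedSet (S : Set Q) : Prop :=
  ∀ a ∈ S, ∀ b ∈ S, ∃ h ∈ Subgroup.closure ((LM : Q → Equiv.Perm Q) '' S), h a = b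

/-- `Q` is connected if `LMlt Q` acts transitively. -/
def Connected (Q : Type*) [LQgrp Q] : Prop := ∀ a b : Q, ∃ h ∈ LMlt Q, h a = b

/-- `Q` is superconnected if every subalgebra is connected. -/
def Superconnected (Q : Type*) [LQgrp Q] : Prop :=
  ∀ S : Set Q, IsSubalg S → ConnectedSet S

/-- Faithfulness of a subalgebra: distinct elements have distinct left translations. -/
def FaithfulOn (S : Set Q) : Prop :=
  ∀ a ∈ S, ∀ b ∈ S, (∀ c ∈ S, mul a c = mul b c) → a = b

/-- `Q` is superfaithful if every subalgebra is faithful. -/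
def Superfaithful (Q : Type*) [LQgrp Q] : Prop :=
  ∀ S : Set Q, IsSubalg S → FaithfulOn S

/-- Latin: right multiplications are bijective. -/
def Latin (Q : Type*) [LQgrp Q] : Prop := ∀ a : Q, Function.Bijective (fun b => mul b a)

/-- The displacement group of a rack/quandle. -/
def Dis (Q : Type*) [LQgrp Q] : Subgroup (Equiv.Perm Q) :=
  Subgroup.closure {g : Equiv.Perm Q | ∃ a b : Q, g = LM a * (LM b)⁻¹}

end LQgrp

/-- A quandle: idempotent, left distributive left quasigroup. -/
class Qdl (Q : Type*) extends LQgrp Q where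
  idem : ∀ x : Q, mul x x = x
  ldist : ∀ x y z : Q, mul x (mul y z) = mul (mul x y) (mul x z)

/-- An involutory quandle. -/
class InvQdl (Q : Type*) extends Qdl Q where
  invol : ∀ x y : Q, mul x (mul x y) = y

open LQgrp

section Aux

theorem Equiv.Perm.apply_inv_self {α : Type*} (f : Equiv.Perm α) (x : α) : f (f⁻¹ x) = x :=
  f.apply_symm_apply x
theorem Equiv.Perm.inv_apply_self {α : Type*} (f : Equiv.Perm α) (x : α) : f⁻¹ (f x) = x :=
  f.symm_apply_apply x

universe u
variable {Q : Type u} [Qdl Q]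

@[simp] lemma LM_apply (a x : Q) : LM a x = mul a x := rfl
@[simp] lemma LM_inv_apply (a x : Q) : (LM a)⁻¹ x = ld a x := rfl

lemma LM_conj_base (a x : Q) : LM a * LM x * (LM a)⁻¹ = LM (mul a x) := by
  ext y
  simp only [Equiv.Perm.mul_apply, LM_apply, LM_inv_apply]
  rw [Qdl.ldist, LQgrp.mul_ld]

lemma LM_mem_LMlt (a : Q) : LM a ∈ LMlt Q :=
  Subgroup.subset_closure ⟨a, rfl⟩

lemma conj_LM {h : Equiv.Perm Q} (hh : h ∈ LMlt Q) : ∀ x : Q, h * LM x * h⁻¹ = LM (h x) := by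
  induction hh using Subgroup.closure_induction with
  | mem g hg => obtain ⟨a, rfl⟩ := hg; exact fun x => LM_conj_base a x
  | one => intro x; simp
  | mul g k hg hk ihg ihk =>
      intro x
      have h1 : g * k * LM x * (g * k)⁻¹ = g * (k * LM x * k⁻¹) * g⁻¹ := by group
      rw [h1, ihk, ihg]
      rfl
  | inv g hg ih =>
      intro x
      have h2 := ih (g⁻¹ x)
      rw [Equiv.Perm.apply_inv_self] at h2
      rw [inv_inv, ← h2]
      group

lemma gen_mem_Dis (a b : Q) : LM a * (LM b)⁻¹ ∈ Dis Q :=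
  Subgroup.subset_closure ⟨a, b, rfl⟩

lemma Dis_le_LMlt : Dis Q ≤ LMlt Q := by
  rw [Dis, Subgroup.closure_le]
  rintro g ⟨a, b, rfl⟩
  exact mul_mem (LM_mem_LMlt a) (inv_mem (LM_mem_LMlt b))

lemma conj_mem_Dis {h g : Equiv.Perm Q} (hh : h ∈ LMlt Q) (hg : g ∈ Dis Q) :
    h * g * h⁻¹ ∈ Dis Q := by
  induction hg using Subgroup.closure_induction with
  | mem k hk =>
      obtain ⟨a, b, rfl⟩ := hk
      have h1 : h * (LM a * (LM b)⁻¹) * h⁻¹ = (h * LM a * h⁻¹) * (h * LM b * h⁻¹)⁻¹ := by group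
      rw [h1, conj_LM hh, conj_LM hh]
      exact gen_mem_Dis _ _
  | one =>
      have h1 : h * 1 * h⁻¹ = (1 : Equiv.Perm Q) := by group
      rw [h1]; exact one_mem _
  | mul k l hk hl ihk ihl =>
      have h1 : h * (k * l) * h⁻¹ = (h * k * h⁻¹) * (h * l * h⁻¹) := by group
      rw [h1]; exact mul_mem ihk ihl
  | inv k hk ih =>
      have h1 : h * k⁻¹ * h⁻¹ = (h * k * h⁻¹)⁻¹ := by group
      rw [h1]; exact inv_mem ih

lemma ld_self (x : Q) : ld x x = x := by
  have h := LQgrp.ld_mul x x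
  rw [Qdl.idem] at h
  exact h

lemma LMlt_orbit {h : Equiv.Perm Q} (hh : h ∈ LMlt Q) :
    ∀ x : Q, ∃ g ∈ Dis Q, g x = h x := by
  induction hh using Subgroup.closure_induction with
  | mem k hk =>
      obtain ⟨a, rfl⟩ := hk
      intro x
      refine ⟨LM a * (LM x)⁻¹, gen_mem_Dis a x, ?_⟩
      simp only [Equiv.Perm.mul_apply, LM_inv_apply, LM_apply]
      rw [ld_self]
  | one => exact fun x => ⟨1, one_mem _, rfl⟩
  | mul k l hk hl ihk ihl =>
      intro x
      obtain ⟨g2, hg2, e2⟩ := ihl x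
      obtain ⟨g1, hg1, e1⟩ := ihk (l x)
      exact ⟨g1 * g2, mul_mem hg1 hg2, by simp [Equiv.Perm.mul_apply, e2, e1]⟩
  | inv k hk ih =>
      intro x
      obtain ⟨g, hg, e⟩ := ih (k⁻¹ x)
      rw [Equiv.Perm.apply_inv_self] at e
      refine ⟨g⁻¹, inv_mem hg, ?_⟩
      rw [Equiv.Perm.inv_eq_iff_eq]
      exact e.symm


lemma dis_transitive (hc : Connected Q) (a b : Q) : ∃ g ∈ Dis Q, g a = b := by
  obtain ⟨h, hh, hab⟩ := hc a b
  obtain ⟨g, hg, e⟩ := LMlt_orbit hh a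
  exact ⟨g, hg, e.trans hab⟩

def Zc (Q : Type u) [Qdl Q] : Subgroup (Equiv.Perm Q) :=
  (Subgroup.center ↥(Dis Q)).map (Dis Q).subtype

lemma Zc_le_Dis : Zc Q ≤ Dis Q := by
  rintro z ⟨c, hc, rfl⟩
  exact c.2

lemma Zc_comm {z g : Equiv.Perm Q} (hz : z ∈ Zc Q) (hg : g ∈ Dis Q) : z * g = g * z := by
  obtain ⟨c, hc, rfl⟩ := hz
  have h1 := (Subgroup.mem_center_iff.mp hc) ⟨g, hg⟩
  have h2 := congrArg Subtype.val h1
  simp only [Subgroup.coe_mul] at h2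
  simpa using h2.symm

lemma mem_Zc {z : Equiv.Perm Q} (h1 : z ∈ Dis Q) (h2 : ∀ g ∈ Dis Q, z * g = g * z) : z ∈ Zc Q :=
  ⟨⟨z, h1⟩, Subgroup.mem_center_iff.mpr fun g => Subtype.ext (h2 g g.2).symm, rfl⟩

lemma conj_mem_Zc {h z : Equiv.Perm Q} (hh : h ∈ LMlt Q) (hz : z ∈ Zc Q) :
    h * z * h⁻¹ ∈ Zc Q := by
  refine mem_Zc (conj_mem_Dis hh (Zc_le_Dis hz)) fun g hg => ?_
  have h2 : h⁻¹ * g * h ∈ Dis Q := by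
    have := conj_mem_Dis (inv_mem hh) hg
    rwa [inv_inv] at this
  have h3 := Zc_comm hz h2
  calc h * z * h⁻¹ * g = h * (z * (h⁻¹ * g * h)) * h⁻¹ := by group
    _ = h * ((h⁻¹ * g * h) * z) * h⁻¹ := by rw [h3]
    _ = g * (h * z * h⁻¹) := by group

lemma Zc_semiregular (ht : ∀ a b : Q, ∃ g ∈ Dis Q, g a = b) {z : Equiv.Perm Q}
    (hz : z ∈ Zc Q) {a : Q} (ha : z a = a) : z = 1 := by
  ext y
  obtain ⟨g, hg, rfl⟩ := ht a y
  have h1 : (z * g) a = (g * z) a := by rw [Zc_comm hz hg]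
  simpa [Equiv.Perm.mul_apply, ha] using h1

lemma fix_comm_eq_one (ht : ∀ a b : Q, ∃ g ∈ Dis Q, g a = b)
    (hfix : ∀ a : Q, {b : Q | mul a b = b} = {a}) {z : Equiv.Perm Q} (hz : z ∈ Zc Q)
    {a : Q} (hcomm : LM a * z = z * LM a) : z = 1 := by
  have h1 : (LM a * z) a = (z * LM a) a := by rw [hcomm]
  simp only [Equiv.Perm.mul_apply, LM_apply, Qdl.idem] at h1
  have h2 : z a ∈ {b : Q | mul a b = b} := h1
  rw [hfix a] at h2
  exact Zc_semiregular ht hz h2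

lemma psi_surj [Finite Q] (ht : ∀ a b : Q, ∃ g ∈ Dis Q, g a = b)
    (hfix : ∀ a : Q, {b : Q | mul a b = b} = {a}) (a : Q) {z : Equiv.Perm Q} (hz : z ∈ Zc Q) :
    ∃ w ∈ Zc Q, w⁻¹ * (LM a * w * (LM a)⁻¹) = z := by
  let f : ↥(Zc Q) → ↥(Zc Q) := fun w =>
    ⟨(w : Equiv.Perm Q)⁻¹ * (LM a * w * (LM a)⁻¹),
      mul_mem (inv_mem w.2) (conj_mem_Zc (LM_mem_LMlt a) w.2)⟩
  have hinj : Function.Injective f := by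
    intro u v huv
    have h1 : (u : Equiv.Perm Q)⁻¹ * (LM a * u * (LM a)⁻¹)
        = (v : Equiv.Perm Q)⁻¹ * (LM a * v * (LM a)⁻¹) := congrArg Subtype.val huv
    have h3 : (v : Equiv.Perm Q) * (u : Equiv.Perm Q)⁻¹
        = LM a * ((v : Equiv.Perm Q) * (u : Equiv.Perm Q)⁻¹) * (LM a)⁻¹ := by
      calc (v : Equiv.Perm Q) * (u : Equiv.Perm Q)⁻¹
          = v * ((u : Equiv.Perm Q)⁻¹ * (LM a * u * (LM a)⁻¹))
            * (LM a * (u : Equiv.Perm Q)⁻¹ * (LM a)⁻¹) := by group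
        _ = v * ((v : Equiv.Perm Q)⁻¹ * (LM a * v * (LM a)⁻¹))
            * (LM a * (u : Equiv.Perm Q)⁻¹ * (LM a)⁻¹) := by rw [h1]
        _ = LM a * ((v : Equiv.Perm Q) * (u : Equiv.Perm Q)⁻¹) * (LM a)⁻¹ := by group
    have h4 : LM a * ((v : Equiv.Perm Q) * (u : Equiv.Perm Q)⁻¹)
        = ((v : Equiv.Perm Q) * (u : Equiv.Perm Q)⁻¹) * LM a := by
      conv_rhs => rw [h3]
      group
    have h5 : (v : Equiv.Perm Q) * (u : Equiv.Perm Q)⁻¹ = 1 :=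
      fix_comm_eq_one ht hfix (mul_mem v.2 (inv_mem u.2)) h4
    exact (Subtype.ext (mul_inv_eq_one.mp h5)).symm
  have hsurj : Function.Surjective f := Finite.injective_iff_surjective.mp hinj
  obtain ⟨w, hw⟩ := hsurj ⟨z, hz⟩
  exact ⟨w, w.2, congrArg Subtype.val hw⟩


instance zSetoid (Q : Type u) [Qdl Q] : Setoid Q where
  r a b := ∃ z ∈ Zc Q, z b = a
  iseqv := {
    refl := fun _ => ⟨1, one_mem _, rfl⟩
    symm := by rintro a b ⟨z, hz, rfl⟩; exact ⟨z⁻¹, inv_mem hz, Equiv.Perm.inv_apply_self z b⟩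
    trans := by rintro a b c ⟨z1, h1, rfl⟩ ⟨z2, h2, rfl⟩; exact ⟨z1 * z2, mul_mem h1 h2, rfl⟩ }

lemma rel_iff {x y : Q} : x ≈ y ↔ ∃ z ∈ Zc Q, z y = x := Iff.rfl

abbrev QBar (Q : Type u) [Qdl Q] : Type u := Quotient (zSetoid Q)

open Relator in
lemma hwd_mul : ((· ≈ ·) ⇒ (· ≈ ·) ⇒ (· ≈ ·)) (LQgrp.mul : Q → Q → Q) LQgrp.mul := by
  rintro a1 a2 ⟨z1, hz1, rfl⟩ b1 b2 ⟨z2, hz2, rfl⟩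
  have hz1' : z1 ∈ LMlt Q := Dis_le_LMlt (Zc_le_Dis hz1)
  rw [_root_.rel_iff]
  refine ⟨z1 * (LM a2 * (z1⁻¹ * z2) * (LM a2)⁻¹),
    mul_mem hz1 (conj_mem_Zc (LM_mem_LMlt a2) (mul_mem (inv_mem hz1) hz2)), ?_⟩
  have e1 : LM (z1 a2) = z1 * LM a2 * z1⁻¹ := (conj_LM hz1' a2).symm
  have e2 : mul (z1 a2) (z2 b2) = (z1 * LM a2 * z1⁻¹) (z2 b2) := by rw [← e1]; rfl
  rw [e2]
  show z1 ((LM a2) ((z1⁻¹ * z2) ((LM a2)⁻¹ (mul a2 b2)))) = z1 ((LM a2) (z1⁻¹ (z2 b2)))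
  simp only [Equiv.Perm.mul_apply, LM_inv_apply, LM_apply]
  rw [LQgrp.ld_mul]

open Relator in
lemma hwd_ld : ((· ≈ ·) ⇒ (· ≈ ·) ⇒ (· ≈ ·)) (LQgrp.ld : Q → Q → Q) LQgrp.ld := by
  rintro a1 a2 ⟨z1, hz1, rfl⟩ b1 b2 ⟨z2, hz2, rfl⟩
  have hz1' : z1 ∈ LMlt Q := Dis_le_LMlt (Zc_le_Dis hz1)
  have hmem : (LM a2)⁻¹ * (z1⁻¹ * z2) * LM a2 ∈ Zc Q := by
    have := conj_mem_Zc (inv_mem (LM_mem_LMlt a2)) (mul_mem (inv_mem hz1) hz2)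
    rwa [inv_inv] at this
  rw [_root_.rel_iff]
  refine ⟨z1 * ((LM a2)⁻¹ * (z1⁻¹ * z2) * LM a2), mul_mem hz1 hmem, ?_⟩
  have e1 : LM (z1 a2) = z1 * LM a2 * z1⁻¹ := (conj_LM hz1' a2).symm
  have e2 : ld (z1 a2) (z2 b2) = (LM (z1 a2))⁻¹ (z2 b2) := rfl
  have e3 : (z1 * LM a2 * z1⁻¹)⁻¹ = z1 * (LM a2)⁻¹ * z1⁻¹ := by group
  rw [e2, e1, e3]
  show z1 ((LM a2)⁻¹ ((z1⁻¹ * z2) ((LM a2) (ld a2 b2)))) = z1 ((LM a2)⁻¹ (z1⁻¹ (z2 b2)))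
  simp only [Equiv.Perm.mul_apply, LM_inv_apply, LM_apply]
  rw [LQgrp.mul_ld]

instance instQdlQBar (Q : Type u) [Qdl Q] : Qdl (QBar Q) where
  mul := Quotient.map₂ LQgrp.mul hwd_mul
  ld := Quotient.map₂ LQgrp.ld hwd_ld
  ld_mul := by rintro ⟨x⟩ ⟨y⟩; exact congrArg (Quotient.mk (zSetoid Q)) (LQgrp.ld_mul x y)
  mul_ld := by rintro ⟨x⟩ ⟨y⟩; exact congrArg (Quotient.mk (zSetoid Q)) (LQgrp.mul_ld x y)
  idem := by rintro ⟨x⟩; exact congrArg (Quotient.mk (zSetoid Q)) (Qdl.idem x)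
  ldist := by rintro ⟨x⟩ ⟨y⟩ ⟨z⟩; exact congrArg (Quotient.mk (zSetoid Q)) (Qdl.ldist x y z)

lemma qbar_mul_mk (x y : Q) :
    (mul (Quotient.mk (zSetoid Q) x) (Quotient.mk (zSetoid Q) y) : QBar Q)
      = Quotient.mk (zSetoid Q) (mul x y) := rfl

lemma qbar_ld_mk (x y : Q) :
    (ld (Quotient.mk (zSetoid Q) x) (Quotient.mk (zSetoid Q) y) : QBar Q)
      = Quotient.mk (zSetoid Q) (ld x y) := rfl


lemma rel_map {h : Equiv.Perm Q} (hh : h ∈ LMlt Q) :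
    ∀ x y : Q, x ≈ y → (h x : Q) ≈ h y := by
  intro x y hr
  obtain ⟨z, hz, rfl⟩ := rel_iff.mp hr
  rw [rel_iff]
  exact ⟨h * z * h⁻¹, conj_mem_Zc hh hz, by simp [Equiv.Perm.mul_apply]⟩

def permLift (h : Equiv.Perm Q) (hh : h ∈ LMlt Q) : Equiv.Perm (QBar Q) where
  toFun := Quotient.map h (rel_map hh)
  invFun := Quotient.map (⇑(h⁻¹)) (rel_map (inv_mem hh))
  left_inv := by rintro ⟨x⟩; exact congrArg (Quotient.mk (zSetoid Q)) (Equiv.Perm.inv_apply_self h x)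
  right_inv := by rintro ⟨x⟩; exact congrArg (Quotient.mk (zSetoid Q)) (Equiv.Perm.apply_inv_self h x)

lemma permLift_mk {h : Equiv.Perm Q} (hh : h ∈ LMlt Q) (x : Q) :
    permLift h hh (Quotient.mk (zSetoid Q) x) = Quotient.mk (zSetoid Q) (h x) := rfl

lemma permLift_mul {g k : Equiv.Perm Q} (hg : g ∈ LMlt Q) (hk : k ∈ LMlt Q)
    (hgk : g * k ∈ LMlt Q) : permLift (g * k) hgk = permLift g hg * permLift k hk :=
  Equiv.ext (by rintro ⟨x⟩; rfl)

lemma permLift_one (h1 : (1 : Equiv.Perm Q) ∈ LMlt Q) : permLift 1 h1 = 1 :=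
  Equiv.ext (by rintro ⟨x⟩; rfl)

lemma permLift_inv {g : Equiv.Perm Q} (hg : g ∈ LMlt Q) (hginv : g⁻¹ ∈ LMlt Q) :
    permLift g⁻¹ hginv = (permLift g hg)⁻¹ :=
  Equiv.ext (by rintro ⟨x⟩; rfl)

lemma permLift_LM (a : Q) (h : LM a ∈ LMlt Q) :
    permLift (LM a) h = LM (Quotient.mk (zSetoid Q) a) :=
  Equiv.ext (by rintro ⟨x⟩; rfl)

lemma permLift_mem_LMlt {h : Equiv.Perm Q} (hh : h ∈ LMlt Q) :
    permLift h hh ∈ LMlt (QBar Q) := by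
  induction hh using Subgroup.closure_induction with
  | mem g hg => obtain ⟨a, rfl⟩ := hg; show permLift (LM a) (LM_mem_LMlt a) ∈ _; rw [permLift_LM]; exact LM_mem_LMlt _
  | one => show permLift 1 (one_mem (LMlt Q)) ∈ _; rw [permLift_one]; exact one_mem _
  | mul g k hg hk ihg ihk => show permLift (g * k) (mul_mem (hg : g ∈ LMlt Q) hk) ∈ _; rw [permLift_mul hg hk]; exact mul_mem ihg ihk
  | inv g hg ih => show permLift g⁻¹ (inv_mem (hg : g ∈ LMlt Q)) ∈ _; rw [permLift_inv hg]; exact inv_mem ih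

lemma permLift_mem_Dis {g : Equiv.Perm Q} (hg : g ∈ Dis Q) :
    permLift g (Dis_le_LMlt hg) ∈ Dis (QBar Q) := by
  induction hg using Subgroup.closure_induction with
  | mem k hk =>
      obtain ⟨a, b, rfl⟩ := hk
      rw [permLift_mul (LM_mem_LMlt a) (inv_mem (LM_mem_LMlt b)),
          permLift_inv (LM_mem_LMlt b), permLift_LM, permLift_LM]
      exact gen_mem_Dis _ _
  | one => rw [permLift_one]; exact one_mem _
  | mul k l hk hl ihk ihl =>
      rw [permLift_mul (Dis_le_LMlt hk) (Dis_le_LMlt hl)]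
      exact mul_mem ihk ihl
  | inv k hk ih =>
      rw [permLift_inv (Dis_le_LMlt hk)]
      exact inv_mem ih

def disHom (Q : Type u) [Qdl Q] : ↥(Dis Q) →* Equiv.Perm (QBar Q) where
  toFun g := permLift g.1 (Dis_le_LMlt g.2)
  map_one' := Equiv.ext (by rintro ⟨x⟩; rfl)
  map_mul' g k := Equiv.ext (by rintro ⟨x⟩; rfl)

lemma disHom_range : (disHom Q).range = Dis (QBar Q) := by
  apply le_antisymm
  · rintro _ ⟨g, rfl⟩
    exact permLift_mem_Dis g.2
  · rw [Dis, Subgroup.closure_le]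
    rintro gb ⟨ab, bb, rfl⟩
    obtain ⟨a, rfl⟩ := Quotient.exists_rep ab
    obtain ⟨b, rfl⟩ := Quotient.exists_rep bb
    refine ⟨⟨LM a * (LM b)⁻¹, gen_mem_Dis a b⟩, ?_⟩
    show permLift (LM a * (LM b)⁻¹) (Dis_le_LMlt (gen_mem_Dis a b))
      = LM (Quotient.mk (zSetoid Q) a) * (LM (Quotient.mk (zSetoid Q) b))⁻¹
    rw [permLift_mul (LM_mem_LMlt a) (inv_mem (LM_mem_LMlt b)),
        permLift_inv (LM_mem_LMlt b), permLift_LM, permLift_LM]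

lemma nilpotent_QBar (hnil : Group.IsNilpotent ↥(Dis Q)) :
    Group.IsNilpotent ↥(Dis (QBar Q)) := by
  haveI := hnil
  have h1 : Group.IsNilpotent ↥(disHom Q).range :=
    nilpotent_of_surjective (disHom Q).rangeRestrict (disHom Q).rangeRestrict_surjective
  rwa [disHom_range] at h1

lemma connected_QBar (hc : Connected Q) : Connected (QBar Q) := by
  intro ab bb
  obtain ⟨a, rfl⟩ := Quotient.exists_rep ab
  obtain ⟨b, rfl⟩ := Quotient.exists_rep bb
  obtain ⟨h, hh, hab⟩ := hc a b
  exact ⟨permLift h hh, permLift_mem_LMlt hh, by rw [permLift_mk, hab]⟩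


lemma fix_QBar [Finite Q] (ht : ∀ a b : Q, ∃ g ∈ Dis Q, g a = b)
    (hfix : ∀ a : Q, {b : Q | mul a b = b} = {a}) :
    ∀ ab : QBar Q, {bb : QBar Q | mul ab bb = bb} = {ab} := by
  intro ab
  obtain ⟨a, rfl⟩ := Quotient.exists_rep ab
  ext bb
  obtain ⟨b, rfl⟩ := Quotient.exists_rep bb
  simp only [Set.mem_setOf_eq, Set.mem_singleton_iff]
  constructor
  · intro hb
    obtain ⟨z, hz, hzb⟩ := rel_iff.mp (Quotient.exact hb)
    obtain ⟨w, hw, hwe⟩ := psi_surj ht hfix a (inv_mem hz)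
    have hcomm : LM a * w * (LM a)⁻¹ = w * z⁻¹ := by rw [← hwe]; group
    have h1 : LM a * w = (w * z⁻¹) * LM a := by
      calc LM a * w = (LM a * w * (LM a)⁻¹) * LM a := by group
        _ = (w * z⁻¹) * LM a := by rw [hcomm]
    have h2 : (LM a * w) b = ((w * z⁻¹) * LM a) b := by rw [h1]
    simp only [Equiv.Perm.mul_apply, LM_apply] at h2
    have h3 : z⁻¹ (mul a b) = b := by rw [← hzb, Equiv.Perm.inv_apply_self]
    rw [h3] at h2
    have h4 : w b ∈ {c : Q | mul a c = c} := h2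
    rw [hfix a] at h4
    exact (Quotient.sound (rel_iff.mpr ⟨w, hw, h4⟩)).symm
  · intro hb
    rw [hb]
    exact congrArg (Quotient.mk (zSetoid Q)) (Qdl.idem a)

lemma card_QBar_lt [Finite Q] {z0 : Equiv.Perm Q} (hz0 : z0 ∈ Zc Q) (hne : z0 ≠ 1) :
    Nat.card (QBar Q) < Nat.card Q := by
  have hsurj : Function.Surjective (Quotient.mk (zSetoid Q)) := fun q => Quotient.exists_rep q
  have hle := Nat.card_le_card_of_surjective _ hsurj
  rcases lt_or_eq_of_le hle with h | h
  · exact h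
  · exfalso
    have hbij : Function.Bijective (Quotient.mk (zSetoid Q)) :=
      hsurj.bijective_of_nat_card_le h.ge
    have ha : ∃ a : Q, z0 a ≠ a := by
      by_contra hcon
      push_neg at hcon
      exact hne (Equiv.ext fun x => hcon x)
    obtain ⟨a, ha⟩ := ha
    have h1 : Quotient.mk (zSetoid Q) (z0 a) = Quotient.mk (zSetoid Q) a :=
      Quotient.sound (rel_iff.mpr ⟨z0, hz0, rfl⟩)
    exact ha (hbij.1 h1)

lemma center_nontrivial_aux {G : Type*} [Group G] [hG : Group.IsNilpotent G] [Nontrivial G] :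
    ∃ z ∈ Subgroup.center G, z ≠ 1 := by
  by_contra hcon
  push_neg at hcon
  have hb : ∀ n, Subgroup.upperCentralSeries G n = ⊥ := by
    intro n
    induction n with
    | zero => exact Subgroup.upperCentralSeries_zero G
    | succ n ihn =>
      rw [eq_bot_iff]
      intro x hx
      rw [Subgroup.mem_upperCentralSeries_succ_iff] at hx
      have hxc : x ∈ Subgroup.center G := by
        rw [Subgroup.mem_center_iff]
        intro g
        have h1 := hx g
        rw [ihn, Subgroup.mem_bot] at h1
        have h2 := mul_inv_eq_one.mp h1
        have h3 : x * g = g * x := by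
          have h4 := congrArg (· * x) h2
          simpa [mul_assoc] using h4
        exact h3.symm
      rw [Subgroup.mem_bot]
      exact hcon x hxc
  obtain ⟨k, hk⟩ := Group.IsNilpotent.nilpotent G
  rw [hb k] at hk
  obtain ⟨x, y, hxy⟩ := exists_pair_ne G
  have hx : x ∈ (⊥ : Subgroup G) := by rw [hk]; exact Subgroup.mem_top x
  have hy : y ∈ (⊥ : Subgroup G) := by rw [hk]; exact Subgroup.mem_top y
  exact hxy ((Subgroup.mem_bot.mp hx).trans (Subgroup.mem_bot.mp hy).symm)

end Aux

theorem latin_aux : ∀ (n : ℕ) (Q : Type u) [Qdl Q] [Finite Q], Nat.card Q ≤ n →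
    Group.IsNilpotent ↥(Dis Q) → Connected Q →
    (∀ a : Q, {b : Q | mul a b = b} = {a}) → Latin Q := by
  intro n
  induction n with
  | zero =>
    intro Q _ _ hcard _ _ _
    haveI : IsEmpty Q := by
      rcases Nat.card_eq_zero.mp (Nat.le_zero.mp hcard) with h | h
      · exact h
      · exact absurd ‹Finite Q› h.not_finite
    intro a
    exact isEmptyElim a
  | succ n ih =>
    intro Q _ _ hcard hnil hconn hfix
    by_cases hd : ∀ g ∈ Dis Q, g = (1 : Equiv.Perm Q)
    · have hsub : ∀ a b : Q, a = b := by
        intro a b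
        have h1 := hd _ (gen_mem_Dis a b)
        have h2 : LM a = LM b := mul_inv_eq_one.mp h1
        have h3 : mul a b = b := by rw [← LM_apply, h2, LM_apply, Qdl.idem]
        have h4 : b ∈ {x : Q | mul a x = x} := h3
        rw [hfix a] at h4
        exact h4.symm
      intro c
      exact ⟨fun x y _ => hsub x y, fun y => ⟨y, hsub _ _⟩⟩
    · push_neg at hd
      obtain ⟨g0, hg0, hg0ne⟩ := hd
      haveI : Nontrivial ↥(Dis Q) :=
        ⟨⟨⟨g0, hg0⟩, 1, fun h => hg0ne (congrArg Subtype.val h)⟩⟩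
      haveI := hnil
      obtain ⟨zc, hzc_mem, hzc_ne⟩ := center_nontrivial_aux (G := ↥(Dis Q))
      have hz0 : (zc : Equiv.Perm Q) ∈ Zc Q := ⟨zc, hzc_mem, rfl⟩
      have hz0ne : (zc : Equiv.Perm Q) ≠ 1 := fun h => hzc_ne (Subtype.ext h)
      have ht : ∀ a b : Q, ∃ g ∈ Dis Q, g a = b := dis_transitive hconn
      have hlt : Nat.card (QBar Q) < Nat.card Q := card_QBar_lt hz0 hz0ne
      have hlatbar : Latin (QBar Q) :=
        ih (QBar Q) (by omega) (nilpotent_QBar hnil) (connected_QBar hconn)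
          (fix_QBar ht hfix)
      intro c
      rw [← Finite.injective_iff_bijective]
      intro a b hab
      have h1 : mul (Quotient.mk (zSetoid Q) a) (Quotient.mk (zSetoid Q) c)
          = mul (Quotient.mk (zSetoid Q) b) (Quotient.mk (zSetoid Q) c) := by
        rw [qbar_mul_mk, qbar_mul_mk]
        exact congrArg (Quotient.mk (zSetoid Q)) hab
      have h2 := (hlatbar (Quotient.mk (zSetoid Q) c)).injective h1
      obtain ⟨z, hz, hzb⟩ := rel_iff.mp (Quotient.exact h2)
      subst hzb
      have hzl : z ∈ LMlt Q := Dis_le_LMlt (Zc_le_Dis hz)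
      have e1 : LM (z b) = z * LM b * z⁻¹ := (conj_LM hzl b).symm
      have e2 : (z * LM b * z⁻¹) c = LM b c := by rw [← e1]; exact hab
      have hu : (LM b)⁻¹ * z * LM b ∈ Zc Q := by
        have := conj_mem_Zc (inv_mem (LM_mem_LMlt b)) hz
        rwa [inv_inv] at this
      have hw : (LM b)⁻¹ * z * LM b * z⁻¹ ∈ Zc Q := mul_mem hu (inv_mem hz)
      have hwc : ((LM b)⁻¹ * z * LM b * z⁻¹) c = c := by
        simp only [Equiv.Perm.mul_apply] at e2 ⊢
        rw [e2]
        exact Equiv.Perm.inv_apply_self _ _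
      have hw1 : (LM b)⁻¹ * z * LM b * z⁻¹ = 1 := Zc_semiregular ht hw hwc
      have h5 : (LM b)⁻¹ * z * LM b = z := mul_inv_eq_one.mp hw1
      have hcomm : LM b * z = z * LM b := by
        calc LM b * z = LM b * ((LM b)⁻¹ * z * LM b) := by rw [h5]
          _ = z * LM b := by group
      have hz1 : z = 1 := fix_comm_eq_one ht hfix hz hcomm
      rw [hz1]
      simp

/-- a finite nilpotent quandle is latin iff it is connected and
superfaithful (`Fix(L_a) = {a}` for all `a`). -/
theorem stmt12 {Q : Type*} [Qdl Q] [Finite Q]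
    (hnil : Group.IsNilpotent ↥(Dis Q)) :
    Latin Q ↔ (Connected Q ∧ ∀ a : Q, {b : Q | mul a b = b} = {a}) := by
  constructor
  · intro hlat
    refine ⟨?_, ?_⟩
    · intro a b
      obtain ⟨c, hc⟩ := (hlat a).surjective b
      exact ⟨LM c, LM_mem_LMlt c, hc⟩
    · intro a
      ext b
      simp only [Set.mem_setOf_eq, Set.mem_singleton_iff]
      constructor
      · intro hab
        exact ((hlat b).injective
          (show mul a b = mul b b by rw [Qdl.idem]; exact hab)).symm
      · rintro rfl
        exact Qdl.idem _
  · rintro ⟨hconn, hfix⟩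
    exact latin_aux (Nat.card Q) Q le_rfl hnil hconn hfix
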